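/- Let A, B, α, β be positive real numbers with α > β and β ∈ (0,1), and let ε_1(n), ε_2(n) be sequences tending to 0 as n → ∞. Suppose Δ_n, n = 0,1,2,…, is a sequence of nonnegative real numbers satisfying Δ_0 = 0 and the recurrence Δ_n = (A/n^α)(1 + ε_1(n)) + Δ_{n−1}(1 − (B/n^β)(1 + ε_2(n))) for all n ≥ 1. Then lim_{n→∞} n^{α−β} Δ_n = A/B. -/

import Mathlib

open Filter
open Real

private lemma exp_sub_one_le_mul (t : ℝ) (ht : 0 ≤ t) :
    Real.exp t - 1 ≤ t * Real.exp t := by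
  have h1 := Real.add_one_le_exp (-t)
  have h2 := Real.exp_pos t
  rw [Real.exp_neg t] at h1
  have h4 : (-t + 1) * Real.exp t ≤ 1 := by
    calc (-t + 1) * Real.exp t ≤ (Real.exp t)⁻¹ * Real.exp t :=
          mul_le_mul_of_nonneg_right h1 h2.le
      _ = 1 := inv_mul_cancel₀ h2.ne'
  nlinarith [h4]

/-- If a nonnegative sequence eventually contracts by factors `1 - q/(n+1)^b`
with `q > 0` and `0 < b < 1`, it tends to zero. -/
private lemma decay_lemma (q b : ℝ) (hq : 0 < q) (hb0 : 0 < b) (hb1 : b < 1)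
    (N : ℕ) (e : ℕ → ℝ) (he0 : ∀ n, 0 ≤ e n)
    (hstep : ∀ n, N ≤ n → e (n + 1) ≤ (1 - q / ((n : ℝ) + 1) ^ b) * e n) :
    Tendsto e atTop (nhds 0) := by
  set f : ℕ → ℝ := fun k => (k : ℝ) ^ (-b) with hf
  have hfnn : ∀ k, 0 ≤ f k := fun k => Real.rpow_nonneg (Nat.cast_nonneg k) _
  set S : ℕ → ℝ := fun n => ∑ k ∈ Finset.range (n + 1), f k with hS
  set C : ℝ := e N * Real.exp (q * S N) with hC
  have key : ∀ n, N ≤ n → e n ≤ C * Real.exp (-(q * S n)) := by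
    intro n hn
    induction n, hn using Nat.le_induction with
    | base =>
        rw [hC, mul_assoc, ← Real.exp_add]
        simp
    | succ n hn ih =>
        have hn1 : (0:ℝ) < (n : ℝ) + 1 := by positivity
        have ht : ((n : ℝ) + 1) ^ (-b) = (((n : ℝ) + 1) ^ b)⁻¹ :=
          Real.rpow_neg hn1.le b
        have hcontr : (1 - q / ((n : ℝ) + 1) ^ b)
            ≤ Real.exp (-(q * ((n : ℝ) + 1) ^ (-b))) := by
          have h := Real.add_one_le_exp (-(q * ((n : ℝ) + 1) ^ (-b)))
          rw [div_eq_mul_inv, ← ht]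
          linarith
        have h1 : e (n + 1) ≤ Real.exp (-(q * ((n : ℝ) + 1) ^ (-b))) * e n :=
          le_trans (hstep n hn) (mul_le_mul_of_nonneg_right hcontr (he0 n))
        have h2 : Real.exp (-(q * ((n : ℝ) + 1) ^ (-b))) * e n
            ≤ Real.exp (-(q * ((n : ℝ) + 1) ^ (-b))) * (C * Real.exp (-(q * S n))) :=
          mul_le_mul_of_nonneg_left ih (Real.exp_pos _).le
        have hSsucc : S (n + 1) = S n + ((n : ℝ) + 1) ^ (-b) := by
          rw [hS]
          simp only [Finset.sum_range_succ]
          push_cast [hf]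
          ring_nf
        calc e (n + 1) ≤ Real.exp (-(q * ((n : ℝ) + 1) ^ (-b))) * (C * Real.exp (-(q * S n))) :=
              le_trans h1 h2
          _ = C * Real.exp (-(q * S (n + 1))) := by
              rw [hSsucc,
                show -(q * (S n + ((n : ℝ) + 1) ^ (-b)))
                  = -(q * S n) + -(q * (((n : ℝ) + 1) ^ (-b))) by ring,
                Real.exp_add]
              ring
  have hnots : ¬ Summable f := by
    rw [hf]
    intro h
    rw [Real.summable_nat_rpow] at h
    linarith
  have hsum : Tendsto (fun n => ∑ i ∈ Finset.range n, f i) atTop atTop :=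
    (not_summable_iff_tendsto_nat_atTop_of_nonneg hfnn).1 hnots
  have hStop : Tendsto S atTop atTop := by
    have := hsum.comp (tendsto_add_atTop_nat 1)
    exact this
  have hbound : Tendsto (fun n => C * Real.exp (-(q * S n))) atTop (nhds 0) := by
    have h1 : Tendsto (fun n => q * S n) atTop atTop := hStop.const_mul_atTop hq
    have h2 : Tendsto (fun n => -(q * S n)) atTop atBot := tendsto_neg_atTop_atBot.comp h1
    have h3 : Tendsto (fun n => Real.exp (-(q * S n))) atTop (nhds 0) :=
      Real.tendsto_exp_atBot.comp h2
    have := h3.const_mul C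
    simpa using this
  apply squeeze_zero' (Eventually.of_forall he0) _ hbound
  filter_upwards [eventually_ge_atTop N] with n hn
  exact key n hn

private lemma ratio_tendsto :
    Tendsto (fun n : ℕ => (n : ℝ) / ((n : ℝ) - 1)) atTop (nhds 1) := by
  have h0 : Tendsto (fun n : ℕ => ((n : ℝ) - 1)) atTop atTop :=
    tendsto_atTop_add_const_right _ (-1) tendsto_natCast_atTop_atTop
  have h1 : Tendsto (fun n : ℕ => ((n : ℝ) - 1)⁻¹) atTop (nhds 0) :=
    h0.inv_tendsto_atTop
  have h2 : Tendsto (fun n : ℕ => 1 + ((n : ℝ) - 1)⁻¹) atTop (nhds 1) := by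
    have := h1.const_add 1
    simpa using this
  apply h2.congr'
  filter_upwards [eventually_ge_atTop 2] with n hn
  have hn2 : (2:ℝ) ≤ (n:ℝ) := by exact_mod_cast hn
  have hne : (n:ℝ) - 1 ≠ 0 := by linarith
  field_simp
  ring

private lemma ratio_pow_tendsto (γ : ℝ) (hγ : 0 ≤ γ) :
    Tendsto (fun n : ℕ => ((n : ℝ) / ((n : ℝ) - 1)) ^ γ) atTop (nhds 1) := by
  have := ratio_tendsto.rpow_const (Or.inr hγ)
  simpa using this

private lemma err_tendsto (γ b : ℝ) (hγ : 0 < γ) (hb0 : 0 < b) (hb1 : b < 1) :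
    Tendsto (fun n : ℕ => (n : ℝ) ^ b * (((n : ℝ) / ((n : ℝ) - 1)) ^ γ - 1))
      atTop (nhds 0) := by
  have h0 : Tendsto (fun n : ℕ => ((n : ℝ) - 1)) atTop atTop :=
    tendsto_atTop_add_const_right _ (-1) tendsto_natCast_atTop_atTop
  have hinv : Tendsto (fun n : ℕ => ((n : ℝ) - 1)⁻¹) atTop (nhds 0) :=
    h0.inv_tendsto_atTop
  -- the dominating sequence
  set G : ℕ → ℝ := fun n =>
    γ * ((n : ℝ) ^ ((b - 1)) * ((n : ℝ) / ((n : ℝ) - 1))) *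
      Real.exp (γ * ((n : ℝ) - 1)⁻¹) with hG
  have hGtend : Tendsto G atTop (nhds 0) := by
    have h1 : Tendsto (fun n : ℕ => (n : ℝ) ^ (b - 1)) atTop (nhds 0) := by
      have := (tendsto_rpow_neg_atTop (show (0:ℝ) < 1 - b by linarith)).comp
        tendsto_natCast_atTop_atTop
      simpa [neg_sub, Function.comp_def] using this
    have h2 := h1.mul ratio_tendsto
    have h3 : Tendsto (fun n : ℕ => Real.exp (γ * ((n : ℝ) - 1)⁻¹)) atTop (nhds 1) := by
      have := (hinv.const_mul γ).rexp
      simpa using this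
    have h4 := ((h2.const_mul γ).mul h3)
    simpa using h4
  apply squeeze_zero' _ _ hGtend
  · filter_upwards [eventually_ge_atTop 2] with n hn
    have hn2 : (2:ℝ) ≤ (n:ℝ) := by exact_mod_cast hn
    have hr1 : (1:ℝ) ≤ (n:ℝ) / ((n:ℝ) - 1) := by
      rw [le_div_iff₀ (by linarith)]; linarith
    have : (1:ℝ) ≤ ((n : ℝ) / ((n : ℝ) - 1)) ^ γ := Real.one_le_rpow hr1 hγ.le
    have hb : (0:ℝ) ≤ (n:ℝ) ^ b := Real.rpow_nonneg (by linarith) b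
    nlinarith
  · filter_upwards [eventually_ge_atTop 2] with n hn
    have hn2 : (2:ℝ) ≤ (n:ℝ) := by exact_mod_cast hn
    have hd : (0:ℝ) < (n:ℝ) - 1 := by linarith
    have hnp : (0:ℝ) < (n:ℝ) := by linarith
    set h : ℝ := ((n : ℝ) - 1)⁻¹ with hh
    have hhpos : 0 < h := inv_pos.2 hd
    have hratio : (n : ℝ) / ((n : ℝ) - 1) = 1 + h := by
      rw [hh]; field_simp; ring
    -- (1+h)^γ ≤ exp (h*γ)
    have hstep1 : (1 + h) ^ γ ≤ Real.exp (h * γ) := by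
      have h1 : (1 + h) ^ γ ≤ (Real.exp h) ^ γ := by
        apply Real.rpow_le_rpow (by linarith) _ hγ.le
        have := Real.add_one_le_exp h
        linarith
      rw [← Real.exp_mul] at h1
      exact h1
    have hstep2 : Real.exp (h * γ) - 1 ≤ (h * γ) * Real.exp (h * γ) :=
      exp_sub_one_le_mul _ (by positivity)
    have hchain : ((n : ℝ) / ((n : ℝ) - 1)) ^ γ - 1 ≤ (h * γ) * Real.exp (h * γ) := by
      rw [hratio]; linarith
    have hbnn : (0:ℝ) ≤ (n:ℝ) ^ b := Real.rpow_nonneg hnp.le b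
    have hkey : (n:ℝ) ^ b * (((n : ℝ) / ((n : ℝ) - 1)) ^ γ - 1)
        ≤ (n:ℝ) ^ b * ((h * γ) * Real.exp (h * γ)) :=
      mul_le_mul_of_nonneg_left hchain hbnn
    have hid : (n:ℝ) ^ b * h = (n : ℝ) ^ ((b - 1)) * ((n : ℝ) / ((n : ℝ) - 1)) := by
      have hsplit : (n : ℝ) ^ ((b - 1)) * (n : ℝ) = (n:ℝ) ^ b := by
        have : (n : ℝ) ^ (b - 1) * (n : ℝ) ^ (1:ℝ) = (n:ℝ) ^ ((b - 1) + 1) := by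
          rw [← Real.rpow_add hnp]
        rw [Real.rpow_one] at this
        rw [this]; norm_num
      rw [← hsplit, hh]
      field_simp
    calc (n:ℝ) ^ b * (((n : ℝ) / ((n : ℝ) - 1)) ^ γ - 1)
        ≤ (n:ℝ) ^ b * ((h * γ) * Real.exp (h * γ)) := hkey
      _ = γ * ((n:ℝ) ^ b * h) * Real.exp (γ * h) := by ring_nf
      _ = G n := by rw [hid, hG]

private lemma coeff_tendsto (γ b B : ℝ) (hγ : 0 < γ) (hb0 : 0 < b) (hb1 : b < 1)
    (ε₂ : ℕ → ℝ) (hε₂ : Tendsto ε₂ atTop (nhds 0)) :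
    Tendsto (fun n : ℕ => ((n : ℝ) / ((n : ℝ) - 1)) ^ γ * (B * (1 + ε₂ n))
      - (n : ℝ) ^ b * (((n : ℝ) / ((n : ℝ) - 1)) ^ γ - 1)) atTop (nhds B) := by
  have h1 : Tendsto (fun n : ℕ => B * (1 + ε₂ n)) atTop (nhds B) := by
    have := (hε₂.const_add 1).const_mul B
    simpa using this
  have h2 := (ratio_pow_tendsto γ hγ.le).mul h1
  have h3 := h2.sub (err_tendsto γ b hγ hb0 hb1)
  simpa using h3

set_option maxHeartbeats 1000000 in
/-- Lemma 1 of Vatutin–Dyakonova: if `Δ_n` is a nonnegative sequence with `Δ_0 = 0`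
satisfying `Δ_n = (A/n^α)(1+ε₁(n)) + Δ_{n-1}(1 - (B/n^β)(1+ε₂(n)))` for positive
`A, B, α, β` with `α > β`, `β ∈ (0,1)`, and `ε₁, ε₂ → 0`, then
`n^{α-β} Δ_n → A/B`. -/
theorem recursive_sequence_asymptotics
    (A B α β : ℝ) (hA : 0 < A) (hB : 0 < B) (hα : 0 < α) (hβ0 : 0 < β)
    (hβα : β < α) (hβ1 : β < 1)
    (ε₁ ε₂ : ℕ → ℝ)
    (hε₁ : Tendsto ε₁ atTop (nhds 0)) (hε₂ : Tendsto ε₂ atTop (nhds 0))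
    (Δ : ℕ → ℝ) (hΔnonneg : ∀ n, 0 ≤ Δ n) (hΔ0 : Δ 0 = 0)
    (hrec : ∀ n : ℕ, 1 ≤ n →
      Δ n = A / (n : ℝ) ^ α * (1 + ε₁ n) +
        Δ (n - 1) * (1 - B / (n : ℝ) ^ β * (1 + ε₂ n))) :
    Tendsto (fun n : ℕ => (n : ℝ) ^ (α - β) * Δ n) atTop (nhds (A / B)) := by
  set γ := α - β with hγdef
  have hγ : 0 < γ := sub_pos.2 hβα
  set x : ℕ → ℝ := fun n => (n : ℝ) ^ γ * Δ n with hxdef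
  have hxnn : ∀ n, 0 ≤ x n := fun n =>
    mul_nonneg (Real.rpow_nonneg (Nat.cast_nonneg n) _) (hΔnonneg n)
  set g : ℕ → ℝ := fun n => ((n : ℝ) / ((n : ℝ) - 1)) ^ γ * (B * (1 + ε₂ n))
      - (n : ℝ) ^ β * (((n : ℝ) / ((n : ℝ) - 1)) ^ γ - 1) with hgdef
  have hg : Tendsto g atTop (nhds B) := coeff_tendsto γ β B hγ hβ0 hβ1 ε₂ hε₂
  have hxid : ∀ n : ℕ, 2 ≤ n →
      x n = A * (1 + ε₁ n) / (n : ℝ) ^ β + (1 - g n / (n : ℝ) ^ β) * x (n - 1) := by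
    intro n hn
    have hn2 : (2:ℝ) ≤ (n:ℝ) := by exact_mod_cast hn
    have hnp : (0:ℝ) < (n:ℝ) := by linarith
    have hdp : (0:ℝ) < (n:ℝ) - 1 := by linarith
    have hcast : ((n - 1 : ℕ) : ℝ) = (n:ℝ) - 1 := by
      have h1 : 1 ≤ n := by omega
      push_cast [h1]
      ring
    have hMp : (0:ℝ) < (n:ℝ) ^ β := Real.rpow_pos_of_pos hnp β
    have hPp : (0:ℝ) < (n:ℝ) ^ γ := Real.rpow_pos_of_pos hnp γ
    have hQp : (0:ℝ) < ((n:ℝ) - 1) ^ γ := Real.rpow_pos_of_pos hdp γ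
    have halpha : (n:ℝ) ^ α = (n:ℝ) ^ β * (n:ℝ) ^ γ := by
      rw [← Real.rpow_add hnp]
      congr 1
      rw [hγdef]; ring
    have hdiv : ((n:ℝ) / ((n:ℝ) - 1)) ^ γ = (n:ℝ) ^ γ / ((n:ℝ) - 1) ^ γ :=
      Real.div_rpow hnp.le hdp.le γ
    simp only [hxdef, hgdef]
    rw [hrec n (by omega), hcast, hdiv, halpha]
    field_simp
    ring
  rw [Metric.tendsto_atTop]
  intro ε hε
  set δ := min (B / 2) (ε * B ^ 2 / (4 * (A + B))) with hδdef
  have hδpos : 0 < δ := lt_min (by positivity) (by positivity)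
  have hδB2 : δ ≤ B / 2 := min_le_left _ _
  have hδε : δ ≤ ε * B ^ 2 / (4 * (A + B)) := min_le_right _ _
  have hδ1 : δ * (4 * (A + B)) ≤ ε * B ^ 2 :=
    (le_div_iff₀ (by positivity : (0:ℝ) < 4 * (A + B))).mp hδε
  have hBδ : 0 < B - δ := by linarith
  have hBδ' : 0 < B + δ := by linarith
  set c := (A + δ) / (B - δ) with hcdef
  set c' := (A - δ) / (B + δ) with hc'def
  have h2B : (0:ℝ) < 2 * B := by linarith
  have hcub : c ≤ A / B + ε / 2 := by
    have heq : A / B + ε / 2 = (2 * A + ε * B) / (2 * B) := by field_simp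
    rw [hcdef, heq, div_le_div_iff₀ hBδ h2B]
    nlinarith [mul_le_mul_of_nonneg_right hδB2 (show (0:ℝ) ≤ ε * B by positivity)]
  have hclb : A / B - ε / 2 ≤ c' := by
    have heq : A / B - ε / 2 = (2 * A - ε * B) / (2 * B) := by field_simp
    rw [hc'def, heq, div_le_div_iff₀ h2B hBδ']
    nlinarith [mul_nonneg (mul_nonneg hε.le hB.le) hδpos.le]
  have hE1 : ∀ᶠ n in atTop, |ε₁ n| ≤ δ / A := by
    have h := hε₁.eventually (Metric.ball_mem_nhds (0:ℝ) (show 0 < δ / A by positivity))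
    filter_upwards [h] with n hn
    rw [Real.dist_eq, sub_zero] at hn
    exact hn.le
  have hE2 : ∀ᶠ n in atTop, |g n - B| ≤ δ := by
    have h := hg.eventually (Metric.ball_mem_nhds B hδpos)
    filter_upwards [h] with n hn
    rw [Real.dist_eq] at hn
    exact hn.le
  have hE3 : ∀ᶠ n : ℕ in atTop, B + δ ≤ (n:ℝ) ^ β := by
    have h := (tendsto_rpow_atTop hβ0).comp tendsto_natCast_atTop_atTop
    exact h.eventually_ge_atTop (B + δ)
  obtain ⟨N, hN⟩ := eventually_atTop.mp (hE1.and (hE2.and (hE3.and (eventually_ge_atTop 2))))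
  set e : ℕ → ℝ := fun n => max (x n - c) 0 with hedef
  set fs : ℕ → ℝ := fun n => max (c' - x n) 0 with hfdef
  have hcore : ∀ n, N ≤ n →
      ((A - δ) / ((n:ℝ) + 1) ^ β + (1 - (B + δ) / ((n:ℝ) + 1) ^ β) * x n ≤ x (n + 1) ∧
       x (n + 1) ≤ (A + δ) / ((n:ℝ) + 1) ^ β + (1 - (B - δ) / ((n:ℝ) + 1) ^ β) * x n ∧
       B + δ ≤ ((n:ℝ) + 1) ^ β) := by
    intro n hn
    obtain ⟨h1, h2, h3, h4⟩ := hN (n + 1) (by omega)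
    have hm : ((n + 1 : ℕ) : ℝ) = (n:ℝ) + 1 := by push_cast; ring
    have hMp : (0:ℝ) < ((n:ℝ) + 1) ^ β := Real.rpow_pos_of_pos (by positivity) β
    have hxid' := hxid (n + 1) h4
    rw [hm] at hxid' h3
    simp only [Nat.add_sub_cancel] at hxid'
    have h1' : |ε₁ (n + 1)| * A ≤ δ := by
      rw [← le_div_iff₀ hA]; exact h1
    have habs := le_abs_self (ε₁ (n + 1))
    have habs' := neg_abs_le (ε₁ (n + 1))
    have hgB := abs_le.mp h2
    refine ⟨?_, ?_, h3⟩
    · rw [hxid']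
      apply add_le_add
      · apply (div_le_div_iff_of_pos_right hMp).mpr
        nlinarith
      · apply mul_le_mul_of_nonneg_right _ (hxnn n)
        have : g (n + 1) / ((n:ℝ) + 1) ^ β ≤ (B + δ) / ((n:ℝ) + 1) ^ β :=
          (div_le_div_iff_of_pos_right hMp).mpr (by linarith [hgB.2])
        linarith
    · rw [hxid']
      apply add_le_add
      · apply (div_le_div_iff_of_pos_right hMp).mpr
        nlinarith
      · apply mul_le_mul_of_nonneg_right _ (hxnn n)
        have : (B - δ) / ((n:ℝ) + 1) ^ β ≤ g (n + 1) / ((n:ℝ) + 1) ^ β :=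
          (div_le_div_iff_of_pos_right hMp).mpr (by linarith [hgB.1])
        linarith
  have hestep : ∀ n, N ≤ n → e (n + 1) ≤ (1 - (B - δ) / ((n:ℝ) + 1) ^ β) * e n := by
    intro n hn
    obtain ⟨_, hub, hM⟩ := hcore n hn
    have hMp : (0:ℝ) < ((n:ℝ) + 1) ^ β := Real.rpow_pos_of_pos (by positivity) β
    have hcq : c * ((B - δ) / ((n:ℝ) + 1) ^ β) = (A + δ) / ((n:ℝ) + 1) ^ β := by
      rw [hcdef]; field_simp
    have hq1 : (B - δ) / ((n:ℝ) + 1) ^ β ≤ 1 := by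
      rw [div_le_one hMp]; linarith
    have h1q : (0:ℝ) ≤ 1 - (B - δ) / ((n:ℝ) + 1) ^ β := by linarith
    have key : x (n + 1) - c ≤ (1 - (B - δ) / ((n:ℝ) + 1) ^ β) * (x n - c) := by
      nlinarith [hub, hcq]
    apply max_le
    · calc x (n + 1) - c ≤ (1 - (B - δ) / ((n:ℝ) + 1) ^ β) * (x n - c) := key
        _ ≤ (1 - (B - δ) / ((n:ℝ) + 1) ^ β) * e n :=
          mul_le_mul_of_nonneg_left (le_max_left _ _) h1q
    · exact mul_nonneg h1q (le_max_right _ _)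
  have hfstep : ∀ n, N ≤ n → fs (n + 1) ≤ (1 - (B + δ) / ((n:ℝ) + 1) ^ β) * fs n := by
    intro n hn
    obtain ⟨hlb, _, hM⟩ := hcore n hn
    have hMp : (0:ℝ) < ((n:ℝ) + 1) ^ β := Real.rpow_pos_of_pos (by positivity) β
    have hcq : c' * ((B + δ) / ((n:ℝ) + 1) ^ β) = (A - δ) / ((n:ℝ) + 1) ^ β := by
      rw [hc'def]; field_simp
    have hq1 : (B + δ) / ((n:ℝ) + 1) ^ β ≤ 1 := by
      rw [div_le_one hMp]; linarith
    have h1q : (0:ℝ) ≤ 1 - (B + δ) / ((n:ℝ) + 1) ^ β := by linarith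
    have key : c' - x (n + 1) ≤ (1 - (B + δ) / ((n:ℝ) + 1) ^ β) * (c' - x n) := by
      nlinarith [hlb, hcq]
    apply max_le
    · calc c' - x (n + 1) ≤ (1 - (B + δ) / ((n:ℝ) + 1) ^ β) * (c' - x n) := key
        _ ≤ (1 - (B + δ) / ((n:ℝ) + 1) ^ β) * fs n :=
          mul_le_mul_of_nonneg_left (le_max_left _ _) h1q
    · exact mul_nonneg h1q (le_max_right _ _)
  have hedec : Tendsto e atTop (nhds 0) :=
    decay_lemma (B - δ) β hBδ hβ0 hβ1 N e (fun n => le_max_right _ _) hestep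
  have hfdec : Tendsto fs atTop (nhds 0) :=
    decay_lemma (B + δ) β hBδ' hβ0 hβ1 N fs (fun n => le_max_right _ _) hfstep
  have hfin : ∀ᶠ n in atTop, dist (x n) (A / B) < ε := by
    have h1 : ∀ᶠ n in atTop, e n < ε / 2 := by
      have := hedec.eventually (Metric.ball_mem_nhds (0:ℝ) (show 0 < ε / 2 by linarith))
      filter_upwards [this] with n hn
      rw [Real.dist_eq, sub_zero] at hn
      exact lt_of_abs_lt hn
    have h2 : ∀ᶠ n in atTop, fs n < ε / 2 := by
      have := hfdec.eventually (Metric.ball_mem_nhds (0:ℝ) (show 0 < ε / 2 by linarith))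
      filter_upwards [this] with n hn
      rw [Real.dist_eq, sub_zero] at hn
      exact lt_of_abs_lt hn
    filter_upwards [h1, h2] with n he hf
    have hxe : x n - c ≤ e n := le_max_left _ _
    have hxf : c' - x n ≤ fs n := le_max_left _ _
    rw [Real.dist_eq, abs_lt]
    constructor
    · linarith
    · linarith
  exact eventually_atTop.mp hfin
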